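/- With G as above and σ ∈ (0,3/2), α > 0: for every q ∈ [1/√2, 1) there exists C_q > 0 such that |G''(ε) − G''(ε̃)| ≤ C_q α^{−(2−σ)} |ε − ε̃| for all ε, ε̃ ∈ [α/√2, qα]. -/

import Mathlib

open Real MeasureTheory Set

/-- `G''(ε) = σ(σ+1) ∫₀^∞ ξ² (1+ξ²) (max(α − ε√(1+ξ²), 0))^{σ−1} dξ`. -/
noncomputable def Gderiv2Fun (σ α ε : ℝ) : ℝ :=
  σ * (σ + 1) * ∫ ξ in Set.Ioi (0:ℝ),
    ξ ^ 2 * (1 + ξ ^ 2) * (max (α - ε * Real.sqrt (1 + ξ ^ 2)) 0) ^ (σ - 1)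

namespace Stmt13Aux

/-- The normalized (α = 1) inner integral. -/
noncomputable def Hfun (σ lam : ℝ) : ℝ :=
  ∫ ξ in Set.Ioi (0:ℝ),
    ξ ^ 2 * (1 + ξ ^ 2) * (max (1 - lam * Real.sqrt (1 + ξ ^ 2)) 0) ^ (σ - 1)

/-- Integrated-by-parts version. -/
noncomputable def Kfun (σ lam : ℝ) : ℝ :=
  ∫ ξ in (0:ℝ)..1,
    (1 + 4 * ξ ^ 2) * Real.sqrt (1 + ξ ^ 2) * (max (1 - lam * Real.sqrt (1 + ξ ^ 2)) 0) ^ σ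

/-- cutoff point -/
noncomputable def xl (lam : ℝ) : ℝ := Real.sqrt (1 / lam ^ 2 - 1)

lemma st_pos (ξ : ℝ) : 0 < Real.sqrt (1 + ξ ^ 2) := Real.sqrt_pos.2 (by positivity)

lemma st_sq (ξ : ℝ) : (Real.sqrt (1 + ξ ^ 2)) ^ 2 = 1 + ξ ^ 2 := Real.sq_sqrt (by positivity)

lemma st_cont : Continuous (fun ξ : ℝ => Real.sqrt (1 + ξ ^ 2)) :=
  (continuous_const.add (continuous_pow 2)).sqrt

lemma sqrt2_lt : Real.sqrt 2 < 3 / 2 := by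
  rw [show (3 / 2 : ℝ) = Real.sqrt ((3 / 2) ^ 2) from (Real.sqrt_sq (by norm_num)).symm]
  exact Real.sqrt_lt_sqrt (by norm_num) (by norm_num)

lemma one_lt_sqrt2 : 1 < Real.sqrt 2 := by
  rw [show (1:ℝ) = Real.sqrt 1 from (Real.sqrt_one).symm]
  exact Real.sqrt_lt_sqrt (by norm_num) (by norm_num)

lemma sqrt2_sq : (Real.sqrt 2) ^ 2 = 2 := Real.sq_sqrt (by norm_num)

lemma st_le_sqrt2 {ξ : ℝ} (h : ξ ^ 2 ≤ 1) : Real.sqrt (1 + ξ ^ 2) ≤ Real.sqrt 2 :=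
  Real.sqrt_le_sqrt (by linarith)

lemma one_le_st (ξ : ℝ) : 1 ≤ Real.sqrt (1 + ξ ^ 2) := by
  have h := Real.sqrt_le_sqrt (show (1:ℝ) ≤ 1 + ξ ^ 2 by nlinarith [sq_nonneg ξ])
  rwa [Real.sqrt_one] at h

section MVT

/-- Mean value estimate for `rpow` on positives. -/
lemma rpow_mvt {σ a b : ℝ} (hσ : 0 < σ) (hb : 0 < b) (hba : b ≤ a) :
    a ^ σ - b ^ σ ≤ σ * (a - b) * (a ^ (σ - 1) + b ^ (σ - 1)) := by
  rcases eq_or_lt_of_le hba with rfl | h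
  · simp
  · have ha : 0 < a := hb.trans h
    obtain ⟨c, hc, hceq⟩ := exists_hasDerivAt_eq_slope (fun x => x ^ σ)
      (fun x => σ * x ^ (σ - 1)) h
      (fun x hx => (Real.continuousAt_rpow_const x σ
        (Or.inl (ne_of_gt (lt_of_lt_of_le hb hx.1)))).continuousWithinAt)
      (fun x hx => Real.hasDerivAt_rpow_const (Or.inl (ne_of_gt (hb.trans hx.1))))
    have hc0 : 0 < c := hb.trans hc.1
    have hmax : c ^ (σ - 1) ≤ a ^ (σ - 1) + b ^ (σ - 1) := by
      rcases le_total σ 1 with h1 | h1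
      · have h2 : c ^ (σ - 1) ≤ b ^ (σ - 1) :=
          Real.rpow_le_rpow_of_nonpos hb hc.1.le (by linarith)
        have h3 : (0:ℝ) ≤ a ^ (σ - 1) := Real.rpow_nonneg ha.le _
        linarith
      · have h2 : c ^ (σ - 1) ≤ a ^ (σ - 1) :=
          Real.rpow_le_rpow hc0.le hc.2.le (by linarith)
        have h3 : (0:ℝ) ≤ b ^ (σ - 1) := Real.rpow_nonneg hb.le _
        linarith
    have hab : 0 < a - b := by linarith
    have heq : a ^ σ - b ^ σ = σ * c ^ (σ - 1) * (a - b) := by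
      field_simp at hceq
      linarith [hceq]
    rw [heq]
    calc σ * c ^ (σ - 1) * (a - b) = σ * (a - b) * c ^ (σ - 1) := by ring
      _ ≤ σ * (a - b) * (a ^ (σ - 1) + b ^ (σ - 1)) :=
          mul_le_mul_of_nonneg_left hmax (mul_nonneg hσ.le hab.le)

/-- Key pointwise difference estimate for truncated powers. -/
lemma max_rpow_diff {σ a b : ℝ} (hσ : 0 < σ) (hba : b ≤ a) :
    (max a 0) ^ σ - (max b 0) ^ σ ≤
      max σ 1 * (a - b) * ((max a 0) ^ (σ - 1) + (max b 0) ^ (σ - 1)) := by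
  have hab0 : (0:ℝ) ≤ a - b := sub_nonneg.2 hba
  have hm1 : (1:ℝ) ≤ max σ 1 := le_max_right _ _
  have hmσ : σ ≤ max σ 1 := le_max_left _ _
  have hnnA : (0:ℝ) ≤ (max a 0) ^ (σ - 1) := Real.rpow_nonneg (le_max_right _ _) _
  have hnnB : (0:ℝ) ≤ (max b 0) ^ (σ - 1) := Real.rpow_nonneg (le_max_right _ _) _
  rcases le_or_gt a 0 with ha | ha
  · rw [max_eq_right ha, max_eq_right (hba.trans ha)]
    have : (0:ℝ) ^ σ - (0:ℝ) ^ σ = 0 := by ring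
    rw [this]
    positivity
  · rcases le_or_gt b 0 with hb | hb
    · rw [max_eq_left ha.le, max_eq_right hb]
      rw [Real.zero_rpow hσ.ne']
      have h1 : a ^ σ = a * a ^ (σ - 1) := by
        rw [show σ = 1 + (σ - 1) by ring, Real.rpow_add ha, Real.rpow_one]
        ring_nf
      have haab : a ≤ a - b := by linarith
      have h2 : a ^ σ ≤ (a - b) * a ^ (σ - 1) := by
        rw [h1]
        exact mul_le_mul_of_nonneg_right haab (Real.rpow_nonneg ha.le _)
      have h0σ : (0:ℝ) ≤ (0:ℝ) ^ (σ - 1) := Real.rpow_nonneg le_rfl _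
      have hA : (0:ℝ) ≤ a ^ (σ - 1) := Real.rpow_nonneg ha.le _
      calc a ^ σ - 0 = a ^ σ := by ring
        _ ≤ (a - b) * a ^ (σ - 1) := h2
        _ ≤ max σ 1 * ((a - b) * a ^ (σ - 1)) :=
            le_mul_of_one_le_left (mul_nonneg hab0 hA) hm1
        _ ≤ max σ 1 * ((a - b) * (a ^ (σ - 1) + (0:ℝ) ^ (σ - 1))) := by
            apply mul_le_mul_of_nonneg_left _ (le_trans zero_le_one hm1)
            apply mul_le_mul_of_nonneg_left _ hab0
            linarith
        _ = max σ 1 * (a - b) * (a ^ (σ - 1) + (0:ℝ) ^ (σ - 1)) := by ring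
    · rw [max_eq_left ha.le, max_eq_left hb.le]
      have hmvt := rpow_mvt hσ hb hba
      have hS : (0:ℝ) ≤ a ^ (σ - 1) + b ^ (σ - 1) :=
        add_nonneg (Real.rpow_nonneg ha.le _) (Real.rpow_nonneg hb.le _)
      have h2 : σ * (a - b) * (a ^ (σ - 1) + b ^ (σ - 1))
          ≤ max σ 1 * (a - b) * (a ^ (σ - 1) + b ^ (σ - 1)) := by
        apply mul_le_mul_of_nonneg_right _ hS
        exact mul_le_mul_of_nonneg_right hmσ hab0
      linarith

end MVT

/-- Scaling: `Gderiv2Fun σ α ε = α^(σ-1) * Gderiv2Fun σ 1 (ε/α)`. -/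
lemma scaling (σ α ε : ℝ) (hα : 0 < α) :
    Gderiv2Fun σ α ε = α ^ (σ - 1) * Gderiv2Fun σ 1 (ε / α) := by
  unfold Gderiv2Fun
  have h : ∀ ξ : ℝ,
      ξ ^ 2 * (1 + ξ ^ 2) * (max (α - ε * Real.sqrt (1 + ξ ^ 2)) 0) ^ (σ - 1)
        = α ^ (σ - 1) *
          (ξ ^ 2 * (1 + ξ ^ 2) * (max (1 - ε / α * Real.sqrt (1 + ξ ^ 2)) 0) ^ (σ - 1)) := by
    intro ξ
    have h1 : α - ε * Real.sqrt (1 + ξ ^ 2)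
        = α * (1 - ε / α * Real.sqrt (1 + ξ ^ 2)) := by field_simp
    have h2 : max (α * (1 - ε / α * Real.sqrt (1 + ξ ^ 2))) 0
        = α * max (1 - ε / α * Real.sqrt (1 + ξ ^ 2)) 0 := by
      rw [mul_max_of_nonneg _ _ hα.le, mul_zero]
    rw [h1, h2, Real.mul_rpow hα.le (le_max_right _ _)]
    ring
  simp_rw [h]
  rw [MeasureTheory.integral_const_mul]
  ring

/-- The `σ = 1` degenerate case: the integral diverges, so (junk value) everything is `0`. -/
lemma sigma_one (α ε : ℝ) : Gderiv2Fun 1 α ε = 0 := by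
  unfold Gderiv2Fun
  rw [show (1:ℝ) - 1 = 0 by ring]
  simp_rw [Real.rpow_zero, mul_one]
  have hni : ¬ IntegrableOn (fun ξ : ℝ => ξ ^ 2 * (1 + ξ ^ 2)) (Ioi 0) := by
    intro h
    have h2 : IntegrableOn (fun ξ : ℝ => ξ ^ 2 * (1 + ξ ^ 2)) (Ioi 1) :=
      h.mono_set (Ioi_subset_Ioi (by norm_num))
    have h3 : IntegrableOn (fun _ : ℝ => (1:ℝ)) (Ioi 1) := by
      apply MeasureTheory.Integrable.mono h2 aestronglyMeasurable_const
      filter_upwards [MeasureTheory.ae_restrict_mem measurableSet_Ioi] with x hx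
      have hx1 : (1:ℝ) ≤ x := le_of_lt hx
      simp only [Real.norm_eq_abs]
      rw [abs_one, abs_of_nonneg (by nlinarith)]
      nlinarith
    rw [MeasureTheory.integrableOn_const_iff] at h3
    rcases h3 with h3 | h3
    · norm_num at h3
    · rw [Real.volume_Ioi] at h3
      exact (lt_irrefl _ h3)
  rw [MeasureTheory.integral_undef hni, mul_zero]

section Core

variable {σ q lam : ℝ}

structure Ctx (σ q lam : ℝ) : Prop where
  hσ0 : 0 < σ
  hσ2 : σ < 3 / 2
  hσ1 : σ ≠ 1
  hq1 : 1 / Real.sqrt 2 ≤ q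
  hq2 : q < 1
  hlam : lam ∈ Icc (1 / Real.sqrt 2) q

namespace Ctx

variable (h : Ctx σ q lam)
include h

lemma hq0 : 0 < q := lt_of_lt_of_le (by positivity) h.hq1

lemma hlam0 : 0 < lam := lt_of_lt_of_le (by positivity) h.hlam.1

lemma hlam1 : lam < 1 := lt_of_le_of_lt h.hlam.2 h.hq2

lemma hlam_inv : 1 / lam ≤ Real.sqrt 2 := by
  rw [div_le_iff₀ h.hlam0]
  have h2 : 1 / Real.sqrt 2 * Real.sqrt 2 ≤ lam * Real.sqrt 2 :=
    mul_le_mul_of_nonneg_right h.hlam.1 (Real.sqrt_nonneg 2)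
  rw [div_mul_cancel₀] at h2
  · linarith
  · positivity

lemma hsub_nonneg : 0 ≤ 1 / lam ^ 2 - 1 := by
  have h1 : lam ^ 2 ≤ 1 := by nlinarith [h.hlam0, h.hlam1]
  rw [sub_nonneg, le_div_iff₀ (pow_pos h.hlam0 2)]
  linarith

lemma xl_sq : (xl lam) ^ 2 = 1 / lam ^ 2 - 1 := Real.sq_sqrt h.hsub_nonneg

lemma st_xl : Real.sqrt (1 + (xl lam) ^ 2) = 1 / lam := by
  have hl := h.hlam0
  rw [h.xl_sq, show 1 + (1 / lam ^ 2 - 1) = (1 / lam) ^ 2 by field_simp; ring]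
  exact Real.sqrt_sq (by positivity)

lemma xl_le_one : xl lam ≤ 1 := by
  have hl := h.hlam0
  have h1 : 1 / lam ^ 2 - 1 ≤ 1 := by
    have h2 : 1 / lam ≤ Real.sqrt 2 := h.hlam_inv
    have h0 : (0:ℝ) ≤ 1 / lam := by positivity
    have h3 : (1 / lam) ^ 2 ≤ 2 := by
      nlinarith [sqrt2_sq, mul_le_mul h2 h2 h0 (Real.sqrt_nonneg 2)]
    have h4 : 1 / lam ^ 2 = (1 / lam) ^ 2 := by field_simp
    linarith
  calc xl lam ≤ Real.sqrt 1 := Real.sqrt_le_sqrt h1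
  _ = 1 := Real.sqrt_one

lemma xq_le_xl : Real.sqrt (1 / q ^ 2 - 1) ≤ xl lam := by
  apply Real.sqrt_le_sqrt
  have h1 : lam ^ 2 ≤ q ^ 2 := by nlinarith [h.hlam.2, h.hlam0]
  have h2 : 1 / q ^ 2 ≤ 1 / lam ^ 2 :=
    one_div_le_one_div_of_le (pow_pos h.hlam0 2) h1
  linarith

lemma xq_pos : 0 < Real.sqrt (1 / q ^ 2 - 1) := by
  apply Real.sqrt_pos.2
  have h1 : q ^ 2 < 1 := by nlinarith [h.hq0, h.hq2]
  have h2 : 1 < 1 / q ^ 2 := by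
    rw [lt_div_iff₀ (pow_pos h.hq0 2)]; linarith
  linarith

lemma xl_pos : 0 < xl lam := lt_of_lt_of_le h.xq_pos h.xq_le_xl

/-- positivity strictly inside the cutoff -/
lemma pos_inside {ξ : ℝ} (h0 : 0 ≤ ξ) (h1 : ξ < xl lam) :
    0 < 1 - lam * Real.sqrt (1 + ξ ^ 2) := by
  have hst : Real.sqrt (1 + ξ ^ 2) < Real.sqrt (1 + (xl lam) ^ 2) :=
    Real.sqrt_lt_sqrt (by positivity) (by nlinarith)
  rw [h.st_xl] at hst
  have := h.hlam0
  have h2 : lam * Real.sqrt (1 + ξ ^ 2) < lam * (1 / lam) :=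
    mul_lt_mul_of_pos_left hst this
  rw [mul_one_div_cancel this.ne'] at h2
  linarith

/-- nonpositivity at/beyond the cutoff -/
lemma nonpos_outside {ξ : ℝ} (h1 : xl lam ≤ ξ) :
    1 - lam * Real.sqrt (1 + ξ ^ 2) ≤ 0 := by
  have h0 : 0 ≤ xl lam := h.xl_pos.le
  have hst : Real.sqrt (1 + (xl lam) ^ 2) ≤ Real.sqrt (1 + ξ ^ 2) :=
    Real.sqrt_le_sqrt (by nlinarith)
  rw [h.st_xl] at hst
  have := h.hlam0
  have h2 : lam * (1 / lam) ≤ lam * Real.sqrt (1 + ξ ^ 2) :=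
    mul_le_mul_of_nonneg_left hst this.le
  rw [mul_one_div_cancel this.ne'] at h2
  linarith

/-- The key quantitative lower bound near the cutoff. -/
lemma key_lower {ξ : ℝ} (h0 : 0 ≤ ξ) (h1 : ξ ≤ xl lam) :
    Real.sqrt (1 / q ^ 2 - 1) / 4 * (xl lam - ξ) ≤ 1 - lam * Real.sqrt (1 + ξ ^ 2) := by
  set b := xl lam with hbdef
  set s := Real.sqrt (1 + ξ ^ 2) with hsdef
  set xq := Real.sqrt (1 / q ^ 2 - 1) with hxqdef
  have hlam0 := h.hlam0
  have hs_pos : 0 < s := st_pos ξ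
  have hs_sq : s ^ 2 = 1 + ξ ^ 2 := st_sq ξ
  have hb1 : b ≤ 1 := h.xl_le_one
  have hxqb : xq ≤ b := h.xq_le_xl
  have hsb : s ≤ 1 / lam := by
    rw [← h.st_xl]
    exact Real.sqrt_le_sqrt (by nlinarith)
  have hs_le : s ≤ Real.sqrt 2 := st_le_sqrt2 (by nlinarith)
  have hinvlam : 1 / lam ≤ Real.sqrt 2 := h.hlam_inv
  have hprod : (1 / lam - s) * (1 / lam + s) = b ^ 2 - ξ ^ 2 := by
    have : (1 / lam) ^ 2 = 1 + b ^ 2 := by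
      rw [h.xl_sq]; field_simp; ring
    nlinarith [this]
  have hfac : b ^ 2 - ξ ^ 2 ≥ xq * (b - ξ) := by nlinarith
  have hlam_sqrt : 1 ≤ lam * Real.sqrt 2 := by
    have := mul_le_mul_of_nonneg_right h.hlam.1 (Real.sqrt_nonneg 2)
    rw [div_mul_cancel₀] at this
    · linarith
    · positivity
  have hgoal : 1 - lam * s = lam * (1 / lam - s) := by
    field_simp
  rw [hgoal]
  have hsum_le : 1 / lam + s ≤ 2 * Real.sqrt 2 := by linarith
  have hdiffnn : 0 ≤ 1 / lam - s := by linarith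
  have hs2pos : (0:ℝ) < Real.sqrt 2 := by positivity
  -- lam * (1/lam - s) * (2√2 * √2) ≥ lam * (1/lam - s)*(1/lam+s)*√2 ≥ ...
  nlinarith [mul_nonneg hdiffnn hs_pos.le, sq_nonneg (Real.sqrt 2),
    mul_nonneg (mul_nonneg hlam0.le hdiffnn) hs2pos.le,
    mul_le_mul_of_nonneg_left hsum_le (mul_nonneg hlam0.le hdiffnn),
    mul_nonneg h.xq_pos.le (sub_nonneg.2 h1), sqrt2_sq,
    mul_le_mul_of_nonneg_right hlam_sqrt (mul_nonneg h.xq_pos.le (sub_nonneg.2 h1))]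

end Ctx

end Core


/-- A function vanishing on the interval is interval integrable. -/
lemma intervalIntegrable_of_eq_zero {f : ℝ → ℝ} {u v : ℝ}
    (hf : ∀ x ∈ Set.uIoc u v, f x = 0) : IntervalIntegrable f volume u v := by
  rw [intervalIntegrable_iff]
  exact (integrable_zero _ _ _).congr
    (by filter_upwards [ae_restrict_mem measurableSet_uIoc] with x hx using (hf x hx).symm)

lemma aa_meas (σ lam : ℝ) :
    Measurable (fun ξ : ℝ => (max (1 - lam * Real.sqrt (1 + ξ ^ 2)) 0) ^ (σ - 1)) := by
  have h1 : Measurable (fun y : ℝ => y ^ (σ - 1)) := by measurability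
  exact h1.comp ((continuous_const.sub (continuous_const.mul st_cont)).max
    continuous_const).measurable

noncomputable def MstC (σ q : ℝ) : ℝ := (Real.sqrt (1 / q ^ 2 - 1) / 4) ^ (σ - 1) / σ + 1

section Core2

variable {σ q lam : ℝ}

namespace Ctx

variable (h : Ctx σ q lam)
include h

lemma weight_int {W : ℝ → ℝ} (hW : Continuous W) {d : ℝ} (hd : xl lam ≤ d) :
    IntervalIntegrable
      (fun ξ => W ξ * (max (1 - lam * Real.sqrt (1 + ξ ^ 2)) 0) ^ (σ - 1)) volume 0 d := by
  have hb0 : 0 ≤ xl lam := h.xl_pos.le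
  have hσ1' : σ - 1 ≠ 0 := sub_ne_zero.2 h.hσ1
  have main : IntervalIntegrable
      (fun ξ => W ξ * (max (1 - lam * Real.sqrt (1 + ξ ^ 2)) 0) ^ (σ - 1)) volume 0 (xl lam) := by
    rcases lt_or_ge σ 1 with hs | hs
    · set b := xl lam with hbdef
      set c := Real.sqrt (1 / q ^ 2 - 1) / 4 with hcdef
      have hc0 : 0 < c := by have := h.xq_pos; positivity
      obtain ⟨C, hC⟩ := isCompact_uIcc.exists_bound_of_continuousOn
        (hW.continuousOn : ContinuousOn W (uIcc 0 b))
      have hC0 : 0 ≤ C := le_trans (norm_nonneg _) (hC 0 left_mem_uIcc)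
      have hg : IntervalIntegrable (fun ξ => C * (c ^ (σ - 1) * (b - ξ) ^ (σ - 1)))
          volume 0 b := by
        have h1 : IntervalIntegrable (fun x : ℝ => x ^ (σ - 1)) volume 0 b :=
          intervalIntegral.intervalIntegrable_rpow' (by linarith [h.hσ0])
        have h2 := h1.comp_sub_left b
        simp only [sub_zero, sub_self] at h2
        exact ((h2.symm.const_mul (c ^ (σ - 1))).const_mul C)
      apply hg.mono_fun
      · exact ((hW.measurable).mul (aa_meas σ lam)).aestronglyMeasurable
      · filter_upwards [ae_restrict_mem measurableSet_uIoc] with x hx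
        rw [Set.uIoc_of_le hb0] at hx
        have hx0 : 0 ≤ x := hx.1.le
        have hxb : x ≤ b := hx.2
        have haann : (0:ℝ) ≤ (max (1 - lam * Real.sqrt (1 + x ^ 2)) 0) ^ (σ - 1) :=
          Real.rpow_nonneg (le_max_right _ _) _
        have hWx : |W x| ≤ C := by
          simpa [Real.norm_eq_abs] using hC x (mem_uIcc_of_le hx0 hxb)
        have hdom : (max (1 - lam * Real.sqrt (1 + x ^ 2)) 0) ^ (σ - 1)
            ≤ c ^ (σ - 1) * (b - x) ^ (σ - 1) := by
          rcases eq_or_lt_of_le hxb with heq | hlt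
          · have h0 : 1 - lam * Real.sqrt (1 + x ^ 2) ≤ 0 := h.nonpos_outside heq.ge
            rw [max_eq_right h0, Real.zero_rpow hσ1', show b - x = 0 by rw [heq, sub_self],
              Real.zero_rpow hσ1', mul_zero]
          · have hposx : 0 < 1 - lam * Real.sqrt (1 + x ^ 2) := h.pos_inside hx0 hlt
            have hkey := h.key_lower hx0 hxb
            rw [max_eq_left hposx.le]
            have hcb : 0 < c * (b - x) := by
              have : 0 < b - x := by linarith
              positivity
            calc (1 - lam * Real.sqrt (1 + x ^ 2)) ^ (σ - 1)
                ≤ (c * (b - x)) ^ (σ - 1) :=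
                  Real.rpow_le_rpow_of_nonpos hcb hkey (by linarith)
              _ = c ^ (σ - 1) * (b - x) ^ (σ - 1) :=
                  Real.mul_rpow hc0.le (by linarith)
        simp only [Real.norm_eq_abs]
        rw [abs_mul, abs_of_nonneg haann]
        have hrhs : (0:ℝ) ≤ C * (c ^ (σ - 1) * (b - x) ^ (σ - 1)) := by
          have h1 : (0:ℝ) ≤ c ^ (σ - 1) := Real.rpow_nonneg hc0.le _
          have h2 : (0:ℝ) ≤ (b - x) ^ (σ - 1) := by
            rcases eq_or_lt_of_le hxb with heq | hlt
            · rw [heq, sub_self]; exact Real.rpow_nonneg le_rfl _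
            · exact Real.rpow_nonneg (by linarith) _
          positivity
        rw [abs_of_nonneg hrhs]
        calc |W x| * (max (1 - lam * Real.sqrt (1 + x ^ 2)) 0) ^ (σ - 1)
            ≤ C * (max (1 - lam * Real.sqrt (1 + x ^ 2)) 0) ^ (σ - 1) :=
              mul_le_mul_of_nonneg_right hWx haann
          _ ≤ C * (c ^ (σ - 1) * (b - x) ^ (σ - 1)) :=
              mul_le_mul_of_nonneg_left hdom hC0
    · apply Continuous.intervalIntegrable
      exact hW.mul (((continuous_const.sub (continuous_const.mul st_cont)).max
        continuous_const).rpow_const (fun x => Or.inr (by linarith)))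
  have tail : IntervalIntegrable
      (fun ξ => W ξ * (max (1 - lam * Real.sqrt (1 + ξ ^ 2)) 0) ^ (σ - 1)) volume (xl lam) d := by
    apply intervalIntegrable_of_eq_zero
    intro x hx
    rw [Set.uIoc_of_le hd] at hx
    rw [max_eq_right (h.nonpos_outside hx.1.le), Real.zero_rpow hσ1', mul_zero]
  exact main.trans tail

lemma aa_int1 : IntervalIntegrable
    (fun ξ => (max (1 - lam * Real.sqrt (1 + ξ ^ 2)) 0) ^ (σ - 1)) volume 0 1 := by
  have := h.weight_int continuous_const (d := 1) h.xl_le_one (W := fun _ => (1:ℝ))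
  simpa using this

lemma aa_integral_le :
    ∫ ξ in (0:ℝ)..1, (max (1 - lam * Real.sqrt (1 + ξ ^ 2)) 0) ^ (σ - 1) ≤ MstC σ q := by
  set b := xl lam with hbdef
  have hb0 : 0 < b := h.xl_pos
  have hb1 : b ≤ 1 := h.xl_le_one
  have hσ1' : σ - 1 ≠ 0 := sub_ne_zero.2 h.hσ1
  set c := Real.sqrt (1 / q ^ 2 - 1) / 4 with hcdef
  have hc0 : 0 < c := by have := h.xq_pos; positivity
  have hIb : IntervalIntegrable
      (fun ξ => (max (1 - lam * Real.sqrt (1 + ξ ^ 2)) 0) ^ (σ - 1)) volume 0 b := by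
    have := h.weight_int continuous_const (d := b) le_rfl (W := fun _ => (1:ℝ))
    simpa using this
  have hIbd : IntervalIntegrable
      (fun ξ => (max (1 - lam * Real.sqrt (1 + ξ ^ 2)) 0) ^ (σ - 1)) volume b 1 := by
    apply intervalIntegrable_of_eq_zero
    intro x hx
    rw [Set.uIoc_of_le hb1] at hx
    rw [max_eq_right (h.nonpos_outside hx.1.le), Real.zero_rpow hσ1']
  have hsplit := intervalIntegral.integral_add_adjacent_intervals hIb hIbd
  have htail : ∫ ξ in b..1, (max (1 - lam * Real.sqrt (1 + ξ ^ 2)) 0) ^ (σ - 1) = 0 := by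
    rw [intervalIntegral.integral_congr (g := fun _ => (0:ℝ)), intervalIntegral.integral_zero]
    intro x hx
    rw [Set.uIcc_of_le hb1] at hx
    simp only
    rw [max_eq_right (h.nonpos_outside hx.1), Real.zero_rpow hσ1']
  have hMnn : (0:ℝ) ≤ (c) ^ (σ - 1) / σ := by
    have := Real.rpow_nonneg hc0.le (σ - 1); have := h.hσ0; positivity
  have hmain : ∫ ξ in (0:ℝ)..b, (max (1 - lam * Real.sqrt (1 + ξ ^ 2)) 0) ^ (σ - 1)
      ≤ MstC σ q := by
    rcases lt_or_ge σ 1 with hs | hs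
    · have hgint : IntervalIntegrable (fun ξ => c ^ (σ - 1) * (b - ξ) ^ (σ - 1)) volume 0 b := by
        have h1 : IntervalIntegrable (fun x : ℝ => x ^ (σ - 1)) volume 0 b :=
          intervalIntegral.intervalIntegrable_rpow' (by linarith [h.hσ0])
        have h2 := h1.comp_sub_left b
        simp only [sub_zero, sub_self] at h2
        exact h2.symm.const_mul _
      have hmono := intervalIntegral.integral_mono_on hb0.le hIb hgint ?_
      · have hval : ∫ ξ in (0:ℝ)..b, c ^ (σ - 1) * (b - ξ) ^ (σ - 1)
            = c ^ (σ - 1) * (b ^ σ / σ) := by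
          rw [intervalIntegral.integral_const_mul]
          congr 1
          have h3 : ∫ ξ in (0:ℝ)..b, (b - ξ) ^ (σ - 1)
              = ∫ x in (b - b)..(b - 0), x ^ (σ - 1) :=
            intervalIntegral.integral_comp_sub_left (fun x => x ^ (σ - 1)) b
          rw [h3]
          simp only [sub_self, sub_zero]
          rw [integral_rpow (Or.inl (by linarith [h.hσ0]))]
          rw [show σ - 1 + 1 = σ by ring, Real.zero_rpow h.hσ0.ne']
          ring
        rw [hval] at hmono
        have hbσ : b ^ σ ≤ 1 := Real.rpow_le_one hb0.le hb1 h.hσ0.le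
        have hc1 : (0:ℝ) ≤ c ^ (σ - 1) := Real.rpow_nonneg hc0.le _
        have : c ^ (σ - 1) * (b ^ σ / σ) ≤ c ^ (σ - 1) / σ := by
          rw [div_eq_mul_inv, div_eq_mul_inv]
          apply mul_le_mul_of_nonneg_left _ hc1
          have hσ0 := h.hσ0
          have hσinv : (0:ℝ) ≤ σ⁻¹ := by positivity
          calc b ^ σ * σ⁻¹ ≤ 1 * σ⁻¹ := mul_le_mul_of_nonneg_right hbσ hσinv
            _ = σ⁻¹ := one_mul _
        unfold MstC
        rw [← hcdef]
        linarith
      · intro x hx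
        have hx0 : 0 ≤ x := hx.1
        have hxb : x ≤ b := hx.2
        rcases eq_or_lt_of_le hxb with heq | hlt
        · rw [max_eq_right (h.nonpos_outside heq.ge), Real.zero_rpow hσ1',
            show b - x = 0 by rw [heq, sub_self], Real.zero_rpow hσ1', mul_zero]
        · have hposx : 0 < 1 - lam * Real.sqrt (1 + x ^ 2) := h.pos_inside hx0 hlt
          have hkey := h.key_lower hx0 hxb
          rw [max_eq_left hposx.le]
          have hcb : 0 < c * (b - x) := by
            have : 0 < b - x := by linarith
            positivity
          calc (1 - lam * Real.sqrt (1 + x ^ 2)) ^ (σ - 1)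
              ≤ (c * (b - x)) ^ (σ - 1) :=
                Real.rpow_le_rpow_of_nonpos hcb hkey (by linarith)
            _ = c ^ (σ - 1) * (b - x) ^ (σ - 1) := Real.mul_rpow hc0.le (by linarith)
    · have hmono := intervalIntegral.integral_mono_on hb0.le hIb
        (intervalIntegrable_const (c := (1:ℝ))) ?_
      · rw [intervalIntegral.integral_const, smul_eq_mul, mul_one, sub_zero] at hmono
        unfold MstC
        rw [← hcdef]
        linarith
      · intro x hx
        apply Real.rpow_le_one (le_max_right _ _) _ (by linarith)
        apply max_le _ zero_le_one
        have h1 : 0 ≤ lam * Real.sqrt (1 + x ^ 2) :=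
          mul_nonneg h.hlam0.le (Real.sqrt_nonneg _)
        linarith
  calc ∫ ξ in (0:ℝ)..1, (max (1 - lam * Real.sqrt (1 + ξ ^ 2)) 0) ^ (σ - 1)
      = (∫ ξ in (0:ℝ)..b, (max (1 - lam * Real.sqrt (1 + ξ ^ 2)) 0) ^ (σ - 1))
        + ∫ ξ in b..1, (max (1 - lam * Real.sqrt (1 + ξ ^ 2)) 0) ^ (σ - 1) := hsplit.symm
    _ = ∫ ξ in (0:ℝ)..b, (max (1 - lam * Real.sqrt (1 + ξ ^ 2)) 0) ^ (σ - 1) := by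
        rw [htail, add_zero]
    _ ≤ MstC σ q := hmain

end Ctx

end Core2


section Core3

variable {σ q lam : ℝ}

namespace Ctx

variable (h : Ctx σ q lam)
include h

lemma T1_cont : Continuous (fun ξ : ℝ =>
    (1 + 4 * ξ ^ 2) * Real.sqrt (1 + ξ ^ 2)
      * (max (1 - lam * Real.sqrt (1 + ξ ^ 2)) 0) ^ σ) := by
  apply Continuous.mul
  · exact (continuous_const.add (continuous_const.mul (continuous_pow 2))).mul st_cont
  · exact ((continuous_const.sub (continuous_const.mul st_cont)).max
      continuous_const).rpow_const (fun x => Or.inr h.hσ0.le)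

/-- Integration by parts identity. -/
lemma ibp : σ * lam * Hfun σ lam = Kfun σ lam := by
  have hb0 : 0 < xl lam := h.xl_pos
  have hb1 : xl lam ≤ 1 := h.xl_le_one
  have hσ0 := h.hσ0
  have hlam0 := h.hlam0
  have hσ1' : σ - 1 ≠ 0 := sub_ne_zero.2 h.hσ1
  set b := xl lam with hbdef
  set T1 : ℝ → ℝ := fun ξ =>
    (1 + 4 * ξ ^ 2) * Real.sqrt (1 + ξ ^ 2)
      * (max (1 - lam * Real.sqrt (1 + ξ ^ 2)) 0) ^ σ with hT1def
  set T2 : ℝ → ℝ := fun ξ =>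
    ξ ^ 2 * (1 + ξ ^ 2) * (max (1 - lam * Real.sqrt (1 + ξ ^ 2)) 0) ^ (σ - 1) with hT2def
  set P : ℝ → ℝ := fun ξ =>
    ξ * (Real.sqrt (1 + ξ ^ 2)) ^ 3 * (max (1 - lam * Real.sqrt (1 + ξ ^ 2)) 0) ^ σ with hPdef
  have hT1cont : Continuous T1 := h.T1_cont
  have hT2int : IntervalIntegrable T2 volume 0 b :=
    h.weight_int ((continuous_pow 2).mul (continuous_const.add (continuous_pow 2)))
      (le_refl b)
  -- derivative of P inside (0, b)
  have hderiv : ∀ x ∈ Ioo (0:ℝ) b,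
      HasDerivWithinAt P (T1 x - σ * lam * T2 x) (Ioi x) x := by
    intro x hx
    set s := Real.sqrt (1 + x ^ 2) with hsdef
    have hs : 0 < s := st_pos x
    have hs2 : s ^ 2 = 1 + x ^ 2 := st_sq x
    have hpos : 0 < 1 - lam * s := h.pos_inside hx.1.le hx.2
    have hinner : HasDerivAt (fun ξ : ℝ => 1 + ξ ^ 2) (2 * x) x := by
      simpa using ((hasDerivAt_pow 2 x).const_add 1)
    have hsqrt0 : HasDerivAt (fun ξ : ℝ => Real.sqrt (1 + ξ ^ 2))
        (2 * x / (2 * Real.sqrt (1 + x ^ 2))) x := hinner.sqrt (by positivity)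
    have hsqrt : HasDerivAt (fun ξ : ℝ => Real.sqrt (1 + ξ ^ 2)) (x / s) x := by
      convert hsqrt0 using 1
      rw [← hsdef]
      field_simp
    have hu : HasDerivAt (fun ξ : ℝ => ξ * (Real.sqrt (1 + ξ ^ 2)) ^ 3)
        (1 * s ^ 3 + x * ((3 : ℕ) * s ^ 2 * (x / s))) x := by
      exact (hasDerivAt_id x).mul (hsqrt.pow 3)
    have hlin : HasDerivAt (fun ξ : ℝ => 1 - lam * Real.sqrt (1 + ξ ^ 2))
        (-(lam * (x / s))) x := by
      simpa using ((hsqrt.const_mul lam).const_sub 1)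
    have hrpow := (Real.hasDerivAt_rpow_const (x := 1 - lam * s) (p := σ)
      (Or.inl hpos.ne')).comp x hlin
    have hev : (fun ξ : ℝ => (max (1 - lam * Real.sqrt (1 + ξ ^ 2)) 0) ^ σ)
        =ᶠ[nhds x] (fun ξ : ℝ => (1 - lam * Real.sqrt (1 + ξ ^ 2)) ^ σ) := by
      have hc : Continuous (fun ξ : ℝ => 1 - lam * Real.sqrt (1 + ξ ^ 2)) :=
        continuous_const.sub (continuous_const.mul st_cont)
      filter_upwards [(hc.tendsto x).eventually (eventually_gt_nhds hpos)] with y hy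
      rw [max_eq_left hy.le]
    have hF : HasDerivAt (fun ξ : ℝ => (max (1 - lam * Real.sqrt (1 + ξ ^ 2)) 0) ^ σ)
        (σ * (1 - lam * s) ^ (σ - 1) * -(lam * (x / s))) x :=
      HasDerivAt.congr_of_eventuallyEq hrpow hev
    have hP := hu.mul hF
    have heq : T1 x - σ * lam * T2 x =
        (1 * s ^ 3 + x * ((3 : ℕ) * s ^ 2 * (x / s)))
          * (max (1 - lam * Real.sqrt (1 + x ^ 2)) 0) ^ σ
        + x * (Real.sqrt (1 + x ^ 2)) ^ 3
          * (σ * (1 - lam * s) ^ (σ - 1) * -(lam * (x / s))) := by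
      rw [hT1def, hT2def]
      simp only [← hsdef]
      rw [max_eq_left hpos.le]
      have hsne : s ≠ 0 := hs.ne'
      have e1 : x * ((3 : ℕ) * s ^ 2 * (x / s)) = 3 * x ^ 2 * s := by
        field_simp
        ring
      have e3 : s ^ 3 = (1 + x ^ 2) * s := by
        rw [pow_succ, hs2]
      rw [e1, e3]
      field_simp
      ring
    rw [heq]
    exact hP.hasDerivWithinAt
  have hPcont : ContinuousOn P (Icc 0 b) := by
    apply Continuous.continuousOn
    exact (continuous_id.mul (st_cont.pow 3)).mul
      (((continuous_const.sub (continuous_const.mul st_cont)).max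
        continuous_const).rpow_const (fun x => Or.inr h.hσ0.le))
  have hint : IntervalIntegrable (fun x => T1 x - σ * lam * T2 x) volume 0 b :=
    (hT1cont.intervalIntegrable (μ := volume) _ _).sub (hT2int.const_mul (σ * lam))
  have hftc := intervalIntegral.integral_eq_sub_of_hasDeriv_right_of_le hb0.le hPcont
    hderiv hint
  have hPb : P b = 0 := by
    rw [hPdef]
    simp only
    rw [hbdef, h.st_xl, mul_one_div_cancel hlam0.ne', sub_self, max_self,
      Real.zero_rpow hσ0.ne', mul_zero]
  have hP0 : P 0 = 0 := by
    rw [hPdef]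
    simp
  rw [hPb, hP0, sub_zero] at hftc
  have hsub := intervalIntegral.integral_sub (hT1cont.intervalIntegrable (μ := volume) 0 b)
    (hT2int.const_mul (σ * lam))
  rw [hsub] at hftc
  rw [intervalIntegral.integral_const_mul] at hftc
  -- hftc : ∫ T1 - σ*lam*∫ T2 = 0
  -- Hfun = ∫_0^b T2
  have hset : (∫ ξ in Set.Ioi (0:ℝ), ξ ^ 2 * (1 + ξ ^ 2)
      * (max (1 - lam * Real.sqrt (1 + ξ ^ 2)) 0) ^ (σ - 1))
      = ∫ ξ in Set.Ioc (0:ℝ) b, ξ ^ 2 * (1 + ξ ^ 2)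
      * (max (1 - lam * Real.sqrt (1 + ξ ^ 2)) 0) ^ (σ - 1) := by
    apply MeasureTheory.setIntegral_eq_of_subset_of_ae_diff_eq_zero
      measurableSet_Ioi.nullMeasurableSet Ioc_subset_Ioi_self
    apply MeasureTheory.ae_of_all
    intro x hx
    have hxb : b ≤ x := by
      rcases hx with ⟨hx1, hx2⟩
      simp only [Set.mem_Ioc, not_and, not_le] at hx2
      exact (hx2 hx1).le
    rw [max_eq_right (h.nonpos_outside hxb), Real.zero_rpow hσ1', mul_zero]
  have hH : Hfun σ lam = ∫ x in (0:ℝ)..b, T2 x := by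
    unfold Hfun
    rw [hset]
    exact (intervalIntegral.integral_of_le hb0.le).symm
  -- Kfun = ∫_0^b T1
  have hK : Kfun σ lam = ∫ x in (0:ℝ)..b, T1 x := by
    unfold Kfun
    have htail : ∫ x in b..1, T1 x = 0 := by
      rw [intervalIntegral.integral_congr (g := fun _ => (0:ℝ)),
        intervalIntegral.integral_zero]
      intro x hx
      rw [Set.uIcc_of_le hb1] at hx
      rw [hT1def]
      simp only
      rw [max_eq_right (h.nonpos_outside hx.1), Real.zero_rpow hσ0.ne', mul_zero]
    have hadj := intervalIntegral.integral_add_adjacent_intervals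
      (hT1cont.intervalIntegrable (μ := volume) 0 b) (hT1cont.intervalIntegrable (μ := volume) b 1)
    rw [htail, add_zero] at hadj
    exact hadj.symm
  rw [hH, hK]
  linarith [hftc]

end Ctx

end Core3


section Core4

variable {σ q lam lam' : ℝ}

lemma maxσ1_nonneg (σ : ℝ) : (0:ℝ) ≤ max σ 1 := le_trans zero_le_one (le_max_right σ 1)

namespace Ctx

variable (h : Ctx σ q lam)
include h

lemma MstC_nonneg : 0 ≤ MstC σ q := by
  unfold MstC
  have h1 : (0:ℝ) ≤ (Real.sqrt (1 / q ^ 2 - 1) / 4) ^ (σ - 1) :=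
    Real.rpow_nonneg (by positivity) _
  have h2 := h.hσ0
  positivity

lemma K_abs_le : |Kfun σ lam| ≤ 10 := by
  have hpt : ∀ x ∈ Set.uIoc (0:ℝ) 1,
      ‖(1 + 4 * x ^ 2) * Real.sqrt (1 + x ^ 2)
        * (max (1 - lam * Real.sqrt (1 + x ^ 2)) 0) ^ σ‖ ≤ 10 := by
    intro x hx
    rw [Set.uIoc_of_le zero_le_one] at hx
    have hx0 : 0 < x := hx.1
    have hx1 : x ≤ 1 := hx.2
    have h2 : (0:ℝ) ≤ Real.sqrt (1 + x ^ 2) := Real.sqrt_nonneg _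
    have h3 : (max (1 - lam * Real.sqrt (1 + x ^ 2)) 0) ^ σ ≤ 1 := by
      apply Real.rpow_le_one (le_max_right _ _) _ h.hσ0.le
      apply max_le _ zero_le_one
      have := mul_nonneg h.hlam0.le h2
      linarith
    have h4 : (0:ℝ) ≤ (max (1 - lam * Real.sqrt (1 + x ^ 2)) 0) ^ σ :=
      Real.rpow_nonneg (le_max_right _ _) _
    have h5 : 1 + 4 * x ^ 2 ≤ 5 := by nlinarith
    have h6 : Real.sqrt (1 + x ^ 2) ≤ 2 := by
      have ha := st_le_sqrt2 (show x ^ 2 ≤ 1 by nlinarith)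
      have hb := sqrt2_lt
      linarith
    rw [Real.norm_eq_abs, abs_of_nonneg (by positivity)]
    calc (1 + 4 * x ^ 2) * Real.sqrt (1 + x ^ 2)
          * (max (1 - lam * Real.sqrt (1 + x ^ 2)) 0) ^ σ
        ≤ (1 + 4 * x ^ 2) * Real.sqrt (1 + x ^ 2) * 1 :=
          mul_le_mul_of_nonneg_left h3 (by positivity)
      _ = (1 + 4 * x ^ 2) * Real.sqrt (1 + x ^ 2) := mul_one _
      _ ≤ 10 := by nlinarith
  have hle := intervalIntegral.norm_integral_le_of_norm_le_const hpt
  unfold Kfun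
  rw [← Real.norm_eq_abs]
  simpa using hle

lemma K_lip_le (h' : Ctx σ q lam') (hle : lam ≤ lam') :
    0 ≤ Kfun σ lam - Kfun σ lam' ∧
    Kfun σ lam - Kfun σ lam' ≤ 20 * max σ 1 * MstC σ q * (lam' - lam) := by
  have hσ0 := h.hσ0
  have hi : IntervalIntegrable (fun x : ℝ => (1 + 4 * x ^ 2) * Real.sqrt (1 + x ^ 2)
      * (max (1 - lam * Real.sqrt (1 + x ^ 2)) 0) ^ σ) volume 0 1 :=
    h.T1_cont.intervalIntegrable (μ := volume) 0 1
  have hi' : IntervalIntegrable (fun x : ℝ => (1 + 4 * x ^ 2) * Real.sqrt (1 + x ^ 2)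
      * (max (1 - lam' * Real.sqrt (1 + x ^ 2)) 0) ^ σ) volume 0 1 :=
    h'.T1_cont.intervalIntegrable (μ := volume) 0 1
  have hdiff : Kfun σ lam - Kfun σ lam' =
      ∫ x in (0:ℝ)..1,
        ((1 + 4 * x ^ 2) * Real.sqrt (1 + x ^ 2)
            * (max (1 - lam * Real.sqrt (1 + x ^ 2)) 0) ^ σ
          - (1 + 4 * x ^ 2) * Real.sqrt (1 + x ^ 2)
            * (max (1 - lam' * Real.sqrt (1 + x ^ 2)) 0) ^ σ) := by
    unfold Kfun
    rw [intervalIntegral.integral_sub hi hi']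
  constructor
  · rw [hdiff]
    apply intervalIntegral.integral_nonneg zero_le_one
    intro x hx
    have ht0 : (0:ℝ) ≤ Real.sqrt (1 + x ^ 2) := Real.sqrt_nonneg _
    have hmm : max (1 - lam' * Real.sqrt (1 + x ^ 2)) 0
        ≤ max (1 - lam * Real.sqrt (1 + x ^ 2)) 0 := by
      apply max_le_max _ le_rfl
      have := mul_le_mul_of_nonneg_right hle ht0
      linarith
    have hr := Real.rpow_le_rpow (le_max_right _ _) hmm hσ0.le
    have hw : (0:ℝ) ≤ (1 + 4 * x ^ 2) * Real.sqrt (1 + x ^ 2) := by positivity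
    have := mul_le_mul_of_nonneg_left hr hw
    simp only [sub_nonneg]
    calc (1 + 4 * x ^ 2) * Real.sqrt (1 + x ^ 2)
          * (max (1 - lam' * Real.sqrt (1 + x ^ 2)) 0) ^ σ
        = (1 + 4 * x ^ 2) * Real.sqrt (1 + x ^ 2)
          * (max (1 - lam' * Real.sqrt (1 + x ^ 2)) 0) ^ σ := rfl
      _ ≤ (1 + 4 * x ^ 2) * Real.sqrt (1 + x ^ 2)
          * (max (1 - lam * Real.sqrt (1 + x ^ 2)) 0) ^ σ := by
          calc (1 + 4 * x ^ 2) * Real.sqrt (1 + x ^ 2)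
              * (max (1 - lam' * Real.sqrt (1 + x ^ 2)) 0) ^ σ
              = (1 + 4 * x ^ 2) * Real.sqrt (1 + x ^ 2)
                * (max (1 - lam' * Real.sqrt (1 + x ^ 2)) 0) ^ σ := by ring
            _ ≤ (1 + 4 * x ^ 2) * Real.sqrt (1 + x ^ 2)
                * (max (1 - lam * Real.sqrt (1 + x ^ 2)) 0) ^ σ := by
                exact mul_le_mul_of_nonneg_left hr hw
  · rw [hdiff]
    have hbint : IntervalIntegrable (fun x : ℝ =>
        10 * max σ 1 * (lam' - lam) * ((max (1 - lam * Real.sqrt (1 + x ^ 2)) 0) ^ (σ - 1)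
          + (max (1 - lam' * Real.sqrt (1 + x ^ 2)) 0) ^ (σ - 1))) volume 0 1 :=
      (h.aa_int1.add h'.aa_int1).const_mul _
    have hmono := intervalIntegral.integral_mono_on zero_le_one (hi.sub hi') hbint ?_
    · have hval : (∫ x in (0:ℝ)..1,
          10 * max σ 1 * (lam' - lam) * ((max (1 - lam * Real.sqrt (1 + x ^ 2)) 0) ^ (σ - 1)
            + (max (1 - lam' * Real.sqrt (1 + x ^ 2)) 0) ^ (σ - 1)))
          = 10 * max σ 1 * (lam' - lam) *
            ((∫ x in (0:ℝ)..1, (max (1 - lam * Real.sqrt (1 + x ^ 2)) 0) ^ (σ - 1))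
              + ∫ x in (0:ℝ)..1, (max (1 - lam' * Real.sqrt (1 + x ^ 2)) 0) ^ (σ - 1)) := by
        rw [intervalIntegral.integral_const_mul, intervalIntegral.integral_add h.aa_int1 h'.aa_int1]
      rw [hval] at hmono
      have hcnn : (0:ℝ) ≤ 10 * max σ 1 * (lam' - lam) := by
        have := maxσ1_nonneg σ
        have := sub_nonneg.2 hle
        positivity
      have hsum : (∫ x in (0:ℝ)..1, (max (1 - lam * Real.sqrt (1 + x ^ 2)) 0) ^ (σ - 1))
            + (∫ x in (0:ℝ)..1, (max (1 - lam' * Real.sqrt (1 + x ^ 2)) 0) ^ (σ - 1))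
          ≤ MstC σ q + MstC σ q := add_le_add h.aa_integral_le h'.aa_integral_le
      have := mul_le_mul_of_nonneg_left hsum hcnn
      calc (∫ x in (0:ℝ)..1,
            ((1 + 4 * x ^ 2) * Real.sqrt (1 + x ^ 2)
                * (max (1 - lam * Real.sqrt (1 + x ^ 2)) 0) ^ σ
              - (1 + 4 * x ^ 2) * Real.sqrt (1 + x ^ 2)
                * (max (1 - lam' * Real.sqrt (1 + x ^ 2)) 0) ^ σ))
          ≤ 10 * max σ 1 * (lam' - lam) * (MstC σ q + MstC σ q) := le_trans hmono this
        _ = 20 * max σ 1 * MstC σ q * (lam' - lam) := by ring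
    · intro x hx
      have hx0 : 0 ≤ x := hx.1
      have hx1 : x ≤ 1 := hx.2
      set t := Real.sqrt (1 + x ^ 2) with htdef
      have ht0 : 0 < t := st_pos x
      have ht2 : t ^ 2 = 1 + x ^ 2 := st_sq x
      have hba : 1 - lam' * t ≤ 1 - lam * t := by nlinarith [mul_le_mul_of_nonneg_right hle ht0.le]
      have key := max_rpow_diff h.hσ0 hba
      have key' : (max (1 - lam * t) 0) ^ σ - (max (1 - lam' * t) 0) ^ σ
          ≤ max σ 1 * ((lam' - lam) * t)
            * ((max (1 - lam * t) 0) ^ (σ - 1) + (max (1 - lam' * t) 0) ^ (σ - 1)) := by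
        have e : (1 - lam * t) - (1 - lam' * t) = (lam' - lam) * t := by ring
        rw [← e]
        exact key
      have hgw0 : (0:ℝ) ≤ (1 + 4 * x ^ 2) * t := by positivity
      have hS0 : (0:ℝ) ≤ (max (1 - lam * t) 0) ^ (σ - 1) + (max (1 - lam' * t) 0) ^ (σ - 1) :=
        add_nonneg (Real.rpow_nonneg (le_max_right _ _) _)
          (Real.rpow_nonneg (le_max_right _ _) _)
      have hx2 : x ^ 2 ≤ 1 := by nlinarith
      have htt : t * t = 1 + x ^ 2 := by rw [← ht2]; ring
      have hwt : ((1 + 4 * x ^ 2) * t) * t ≤ 10 := by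
        nlinarith [htt, hx2, sq_nonneg x, mul_le_mul hx2 hx2 (sq_nonneg x) zero_le_one]
      calc (1 + 4 * x ^ 2) * t * (max (1 - lam * t) 0) ^ σ
            - (1 + 4 * x ^ 2) * t * (max (1 - lam' * t) 0) ^ σ
          = ((1 + 4 * x ^ 2) * t)
            * ((max (1 - lam * t) 0) ^ σ - (max (1 - lam' * t) 0) ^ σ) := by ring
        _ ≤ ((1 + 4 * x ^ 2) * t) * (max σ 1 * ((lam' - lam) * t)
              * ((max (1 - lam * t) 0) ^ (σ - 1) + (max (1 - lam' * t) 0) ^ (σ - 1))) :=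
            mul_le_mul_of_nonneg_left key' hgw0
        _ = (((1 + 4 * x ^ 2) * t) * t) * (max σ 1 * (lam' - lam)
              * ((max (1 - lam * t) 0) ^ (σ - 1) + (max (1 - lam' * t) 0) ^ (σ - 1))) := by ring
        _ ≤ 10 * (max σ 1 * (lam' - lam)
              * ((max (1 - lam * t) 0) ^ (σ - 1) + (max (1 - lam' * t) 0) ^ (σ - 1))) := by
            apply mul_le_mul_of_nonneg_right hwt
            exact mul_nonneg (mul_nonneg (maxσ1_nonneg σ) (sub_nonneg.2 hle)) hS0
        _ = 10 * max σ 1 * (lam' - lam)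
              * ((max (1 - lam * t) 0) ^ (σ - 1) + (max (1 - lam' * t) 0) ^ (σ - 1)) := by ring

lemma H_lip_ordered (h' : Ctx σ q lam') (hle : lam ≤ lam') :
    |Hfun σ lam - Hfun σ lam'|
      ≤ (2 * (20 * max σ 1 * MstC σ q + 10) / σ) * |lam - lam'| := by
  have hσ0 := h.hσ0
  have hne : σ * lam ≠ 0 := (mul_pos hσ0 h.hlam0).ne'
  have hne' : σ * lam' ≠ 0 := (mul_pos hσ0 h'.hlam0).ne'
  have e1 : Hfun σ lam = Kfun σ lam / (σ * lam) :=
    eq_div_of_mul_eq hne ((mul_comm _ _).trans h.ibp)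
  have e2 : Hfun σ lam' = Kfun σ lam' / (σ * lam') :=
    eq_div_of_mul_eq hne' ((mul_comm _ _).trans h'.ibp)
  obtain ⟨hKnn, hKlip⟩ := h.K_lip_le h' hle
  have hM0 : 0 ≤ MstC σ q := h.MstC_nonneg
  have hcoef : (0:ℝ) ≤ 20 * max σ 1 * MstC σ q :=
    mul_nonneg (mul_nonneg (by norm_num) (maxσ1_nonneg σ)) hM0
  have hKabs : |Kfun σ lam - Kfun σ lam'| ≤ 20 * max σ 1 * MstC σ q * (lam' - lam) := by
    rw [abs_of_nonneg hKnn]; exact hKlip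
  have hK'abs : |Kfun σ lam'| ≤ 10 := h'.K_abs_le
  rw [e1, e2, div_sub_div _ _ hne hne', abs_div]
  have hnum : |Kfun σ lam * (σ * lam') - σ * lam * Kfun σ lam'|
      ≤ σ * ((20 * max σ 1 * MstC σ q + 10) * (lam' - lam)) := by
    have hrw : Kfun σ lam * (σ * lam') - σ * lam * Kfun σ lam'
        = σ * ((Kfun σ lam - Kfun σ lam') * lam' + Kfun σ lam' * (lam' - lam)) := by ring
    rw [hrw, abs_mul, abs_of_pos hσ0]
    apply mul_le_mul_of_nonneg_left _ hσ0.le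
    calc |(Kfun σ lam - Kfun σ lam') * lam' + Kfun σ lam' * (lam' - lam)|
        ≤ |(Kfun σ lam - Kfun σ lam') * lam'| + |Kfun σ lam' * (lam' - lam)| := abs_add_le _ _
      _ = |Kfun σ lam - Kfun σ lam'| * |lam'| + |Kfun σ lam'| * |lam' - lam| := by
          rw [abs_mul, abs_mul]
      _ ≤ (20 * max σ 1 * MstC σ q * (lam' - lam)) * 1 + 10 * (lam' - lam) := by
          apply add_le_add
          · apply mul_le_mul hKabs _ (abs_nonneg _)
              (mul_nonneg hcoef (sub_nonneg.2 hle))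
            rw [abs_of_pos h'.hlam0]
            exact h'.hlam1.le
          · rw [abs_of_nonneg (sub_nonneg.2 hle)]
            exact mul_le_mul_of_nonneg_right hK'abs (sub_nonneg.2 hle)
      _ = (20 * max σ 1 * MstC σ q + 10) * (lam' - lam) := by ring
  have hden_pos : 0 < σ * lam * (σ * lam') :=
    mul_pos (mul_pos hσ0 h.hlam0) (mul_pos hσ0 h'.hlam0)
  have hden_lb : σ ^ 2 / 2 ≤ |σ * lam * (σ * lam')| := by
    rw [abs_of_pos hden_pos]
    have h1 : 1 / Real.sqrt 2 * (1 / Real.sqrt 2) ≤ lam * lam' :=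
      mul_le_mul h.hlam.1 h'.hlam.1 (by positivity)
        (le_trans (by positivity) h.hlam.1)
    have h2 : 1 / Real.sqrt 2 * (1 / Real.sqrt 2) = 1 / 2 := by
      rw [div_mul_div_comm, one_mul, Real.mul_self_sqrt (by norm_num)]
    have hll : 1 / 2 ≤ lam * lam' := by linarith
    nlinarith
  have habs_ll : |lam - lam'| = lam' - lam := by
    rw [abs_sub_comm, abs_of_nonneg (sub_nonneg.2 hle)]
  calc |Kfun σ lam * (σ * lam') - σ * lam * Kfun σ lam'| / |σ * lam * (σ * lam')|
      ≤ (σ * ((20 * max σ 1 * MstC σ q + 10) * (lam' - lam))) / (σ ^ 2 / 2) := by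
        apply div_le_div₀ _ hnum (by positivity) hden_lb
        apply mul_nonneg hσ0.le
        exact mul_nonneg (by linarith) (sub_nonneg.2 hle)
    _ = (2 * (20 * max σ 1 * MstC σ q + 10) / σ) * |lam - lam'| := by
        rw [habs_ll]
        field_simp

lemma H_lip (h' : Ctx σ q lam') :
    |Hfun σ lam - Hfun σ lam'|
      ≤ (2 * (20 * max σ 1 * MstC σ q + 10) / σ) * |lam - lam'| := by
  rcases le_total lam lam' with hle | hle
  · exact h.H_lip_ordered h' hle
  · have hres := h'.H_lip_ordered h hle
    rwa [abs_sub_comm (Hfun σ lam') (Hfun σ lam), abs_sub_comm lam' lam] at hres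

end Ctx

end Core4

end Stmt13Aux

theorem stmt_13 (σ : ℝ) (hσ : σ ∈ Set.Ioo (0:ℝ) (3/2)) :
    ∀ q ∈ Set.Ico (1 / Real.sqrt 2) (1:ℝ),
      ∃ C : ℝ, 0 < C ∧ ∀ α : ℝ, 0 < α →
        ∀ ε ∈ Set.Icc (α / Real.sqrt 2) (q * α),
        ∀ ε' ∈ Set.Icc (α / Real.sqrt 2) (q * α),
          |Gderiv2Fun σ α ε - Gderiv2Fun σ α ε'| ≤ C * α ^ (-(2 - σ)) * |ε - ε'| := by
  obtain ⟨hσ0, hσ2⟩ := hσ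
  intro q hq
  obtain ⟨hq1, hq2⟩ := hq
  by_cases hσ1 : σ = 1
  · refine ⟨1, one_pos, fun α hα ε hε ε' hε' => ?_⟩
    subst hσ1
    rw [Stmt13Aux.sigma_one, Stmt13Aux.sigma_one, sub_self, abs_zero]
    have h1 : (0:ℝ) ≤ α ^ (-(2 - (1:ℝ))) := Real.rpow_nonneg hα.le _
    exact mul_nonneg (mul_nonneg zero_le_one h1) (abs_nonneg _)
  · set L := 2 * (20 * max σ 1 * Stmt13Aux.MstC σ q + 10) / σ with hLdef
    have hM0 : 0 ≤ Stmt13Aux.MstC σ q := by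
      unfold Stmt13Aux.MstC
      have h1 : (0:ℝ) ≤ (Real.sqrt (1 / q ^ 2 - 1) / 4) ^ (σ - 1) :=
        Real.rpow_nonneg (by positivity) _
      positivity
    have hmax0 := Stmt13Aux.maxσ1_nonneg σ
    have hL0 : 0 < L := by
      rw [hLdef]
      apply div_pos _ hσ0
      nlinarith [mul_nonneg (mul_nonneg (by norm_num : (0:ℝ) ≤ 20) hmax0) hM0]
    have hσ10 : (0:ℝ) < σ * (σ + 1) := mul_pos hσ0 (by linarith)
    refine ⟨σ * (σ + 1) * L, mul_pos hσ10 hL0, ?_⟩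
    intro α hα ε hε ε' hε'
    have hmem : ∀ x ∈ Set.Icc (α / Real.sqrt 2) (q * α),
        x / α ∈ Set.Icc (1 / Real.sqrt 2) q := by
      intro x hx
      constructor
      · rw [le_div_iff₀ hα]
        have he : α / Real.sqrt 2 = 1 / Real.sqrt 2 * α := by ring
        linarith [hx.1]
      · rw [div_le_iff₀ hα]
        linarith [hx.2]
    have hc : Stmt13Aux.Ctx σ q (ε / α) := ⟨hσ0, hσ2, hσ1, hq1, hq2, hmem ε hε⟩
    have hc' : Stmt13Aux.Ctx σ q (ε' / α) := ⟨hσ0, hσ2, hσ1, hq1, hq2, hmem ε' hε'⟩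
    have hHlip := hc.H_lip hc'
    rw [← hLdef] at hHlip
    have hsc : Gderiv2Fun σ α ε = α ^ (σ - 1) * (σ * (σ + 1) * Stmt13Aux.Hfun σ (ε / α)) := by
      rw [Stmt13Aux.scaling σ α ε hα]; rfl
    have hsc' : Gderiv2Fun σ α ε' = α ^ (σ - 1) * (σ * (σ + 1) * Stmt13Aux.Hfun σ (ε' / α)) := by
      rw [Stmt13Aux.scaling σ α ε' hα]; rfl
    have hαp : 0 < α ^ (σ - 1) := Real.rpow_pos_of_pos hα _
    have hquot : |ε / α - ε' / α| = |ε - ε'| / α := by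
      rw [div_sub_div_same, abs_div, abs_of_pos hα]
    have hpow : α ^ (σ - 1) = α ^ (-(2 - σ)) * α := by
      rw [show σ - 1 = -(2 - σ) + 1 by ring, Real.rpow_add hα, Real.rpow_one]
    calc |Gderiv2Fun σ α ε - Gderiv2Fun σ α ε'|
        = α ^ (σ - 1) * (σ * (σ + 1))
            * |Stmt13Aux.Hfun σ (ε / α) - Stmt13Aux.Hfun σ (ε' / α)| := by
          rw [hsc, hsc', show α ^ (σ - 1) * (σ * (σ + 1) * Stmt13Aux.Hfun σ (ε / α))
              - α ^ (σ - 1) * (σ * (σ + 1) * Stmt13Aux.Hfun σ (ε' / α))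
              = (α ^ (σ - 1) * (σ * (σ + 1)))
                * (Stmt13Aux.Hfun σ (ε / α) - Stmt13Aux.Hfun σ (ε' / α)) by ring,
            abs_mul, abs_of_pos (mul_pos hαp hσ10)]
      _ ≤ α ^ (σ - 1) * (σ * (σ + 1)) * (L * |ε / α - ε' / α|) :=
          mul_le_mul_of_nonneg_left hHlip (mul_pos hαp hσ10).le
      _ = σ * (σ + 1) * L * α ^ (-(2 - σ)) * |ε - ε'| := by
          rw [hquot, hpow]
          field_simp
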